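/- Let G be a finite-index normal subgroup of SL(2,ℤ), let f be a weight-2 cusp form for G, let γ ∈ SL(2,ℤ), and let g be a weight-2 cusp form for G with g = f ∣[2] γ (such g exists since G is normal in SL(2,ℤ)). Then the improper integrals defining the Eichler integrals u_f and u_g converge absolutely for every τ ∈ ℍ, and there exists a constant c ∈ ℂ such that u_f(γ·τ) = u_g(τ) + c for all τ ∈ ℍ, where γ·τ = (aτ+b)/(cτ+d) denotes the Möbius action of γ = [[a,b],[c,d]]. -/

import Mathlib

noncomputable section
open Matrix Complex UpperHalfPlane MeasureTheory
open scoped Manifold MatrixGroups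

abbrev SL2Z := Matrix.SpecialLinearGroup (Fin 2) ℤ

/-- The automorphy factor `cτ + d` for `γ = [[a,b],[c,d]] ∈ SL(2,ℤ)`. -/
def denomZ (γ : SL2Z) (τ : ℍ) : ℂ :=
  ((γ : Matrix (Fin 2) (Fin 2) ℤ) 1 0 : ℂ) * (τ : ℂ) + ((γ : Matrix (Fin 2) (Fin 2) ℤ) 1 1 : ℂ)

/-- The weight-2 slash action: `(f ∣[2] γ)(τ) = (cτ+d)⁻² f(γ·τ)`. -/
def slash2 (f : ℍ → ℂ) (γ : SL2Z) : ℍ → ℂ :=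
  fun τ => denomZ γ τ ^ (-2 : ℤ) * f (γ • τ)

/-- `f` is a weight-2 cusp form for the subgroup `G ≤ SL(2,ℤ)`: holomorphic,
weight-2 invariant under `G`, and `(f ∣[2] δ)(τ) → 0` as `Im τ → ∞` for all
`δ ∈ SL(2,ℤ)`. -/
def IsCusp2 (G : Subgroup SL2Z) (f : ℍ → ℂ) : Prop :=
  MDifferentiable 𝓘(ℂ) 𝓘(ℂ) f ∧
  (∀ γ ∈ G, ∀ τ : ℍ, f (γ • τ) = denomZ γ τ ^ 2 * f τ) ∧
  (∀ δ : SL2Z, Filter.Tendsto (slash2 f δ) UpperHalfPlane.atImInfty (nhds 0))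

/-- The function `t ↦ f(x + it)` (defined to be `0` for `t ≤ 0`). -/
def vertF (f : ℍ → ℂ) (x : ℝ) : ℝ → ℂ :=
  fun t => if h : 0 < t then f ⟨⟨x, t⟩, h⟩ else 0

/-- The Eichler integral `u_f(τ) = ∫_{i∞}^τ f(z) dz = −i ∫_{Im τ}^∞ f(Re τ + it) dt`. -/
def eichler (f : ℍ → ℂ) (τ : ℍ) : ℂ :=
  -Complex.I * ∫ t in Set.Ioi (UpperHalfPlane.im τ), vertF f (UpperHalfPlane.re τ) t

section Stmt17Aux

open Filter Set Function

lemma periodF {G : Subgroup SL2Z} [G.Normal] [G.FiniteIndex] {f : ℍ → ℂ} (hf : IsCusp2 G f) :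
    Function.Periodic (f ∘ ofComplex) (G.index : ℝ) := by
  have hTn : (ModularGroup.T ^ G.index) ∈ G := Subgroup.pow_index_mem G ModularGroup.T
  intro w
  by_cases hw : 0 < w.im
  · have hw' : 0 < (w + ((G.index : ℝ) : ℂ)).im := by simpa using hw
    simp only [Function.comp_apply, ofComplex_apply_of_im_pos hw', ofComplex_apply_of_im_pos hw]
    have key := hf.2.1 _ hTn ⟨w, hw⟩
    rw [← zpow_natCast ModularGroup.T G.index] at key
    have hden : denomZ (ModularGroup.T ^ (G.index : ℤ)) ⟨w, hw⟩ = 1 := by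
      rw [denomZ, ModularGroup.coe_T_zpow (G.index : ℤ)]
      simp
    rw [hden, one_pow, one_mul] at key
    have heq : (⟨w + ((G.index : ℝ) : ℂ), hw'⟩ : ℍ) =
        ModularGroup.T ^ (G.index : ℤ) • (UpperHalfPlane.mk w hw) := by
      apply UpperHalfPlane.ext
      rw [ModularGroup.coe_T_zpow_smul_eq, UpperHalfPlane.coe_mk_subtype,
        UpperHalfPlane.coe_mk]
      push_cast
      ring
    rw [heq]
    exact key
  · have h0 : w.im ≤ 0 := not_lt.mp hw
    have h1 : (w + ((G.index : ℝ) : ℂ)).im ≤ 0 := by simpa using h0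
    simp only [Function.comp_apply, ofComplex_apply_of_im_nonpos h1, ofComplex_apply_of_im_nonpos h0]

lemma slash2_one' (f : ℍ → ℂ) : slash2 f 1 = f := by
  funext τ
  have h1 : denomZ 1 τ = 1 := by simp [denomZ]
  simp [slash2, h1, one_smul]

lemma diffF {G : Subgroup SL2Z} {f : ℍ → ℂ} (hf : IsCusp2 G f) {z : ℂ} (hz : 0 < z.im) :
    DifferentiableAt ℂ (f ∘ ofComplex) z :=
  mdifferentiableAt_iff.mp (hf.1 ⟨z, hz⟩)

lemma decay {G : Subgroup SL2Z} [G.Normal] [G.FiniteIndex] {f : ℍ → ℂ} (hf : IsCusp2 G f) :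
    ∃ A C c : ℝ, 0 < c ∧ ∀ τ : ℍ, A ≤ τ.im → ‖f τ‖ ≤ C * Real.exp (-c * τ.im) := by
  have hn0 : (0:ℝ) < (G.index : ℝ) := by
    have := Subgroup.FiniteIndex.index_ne_zero (H := G)
    positivity
  have h_hol : ∀ᶠ z in Filter.comap Complex.im Filter.atTop,
      DifferentiableAt ℂ (f ∘ ofComplex) z :=
    Filter.eventually_of_mem (Filter.preimage_mem_comap (Filter.Ioi_mem_atTop 0))
      (fun z hz => diffF hf hz)
  have h_zer : Filter.Tendsto (f ∘ ofComplex) (Filter.comap Complex.im Filter.atTop) (nhds 0) := by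
    have h1 : Filter.Tendsto f atImInfty (nhds 0) := by
      have := hf.2.2 1
      rwa [slash2_one'] at this
    exact h1.comp tendsto_comap_im_ofComplex
  have hO := (periodF hf).exp_decay_of_zero_at_inf hn0 h_hol h_zer
  have hO2 : f =O[atImInfty] fun τ : ℍ => Real.exp (-2 * Real.pi * τ.im / G.index) := by
    have := hO.comp_tendsto tendsto_coe_atImInfty
    simpa [Function.comp_def, ofComplex_apply] using this
  obtain ⟨C, hC⟩ := Asymptotics.isBigO_iff.mp hO2
  obtain ⟨A, hA⟩ := (atImInfty_mem _).mp hC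
  refine ⟨A, C, 2 * Real.pi / G.index, by positivity, fun τ hτ => ?_⟩
  have h2 := hA τ hτ
  have h3 : -(2 * Real.pi / G.index) * τ.im = -2 * Real.pi * τ.im / G.index := by ring
  rw [h3]
  simpa [Real.norm_eq_abs, Real.abs_exp] using h2

lemma contF {G : Subgroup SL2Z} {f : ℍ → ℂ} (hf : IsCusp2 G f) :
    ContinuousOn (f ∘ ofComplex) {z : ℂ | 0 < z.im} :=
  fun _ hz => ((diffF hf hz).continuousAt).continuousWithinAt

lemma vertF_eq (f : ℍ → ℂ) (x : ℝ) {t : ℝ} (ht : 0 < t) :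
    vertF f x t = (f ∘ ofComplex) ((x : ℂ) + (t : ℂ) * Complex.I) := by
  have hz : (0:ℝ) < ((x : ℂ) + (t : ℂ) * Complex.I).im := by simpa using ht
  rw [vertF, Function.comp_apply, dif_pos ht, ofComplex_apply_of_im_pos hz]
  congr 1
  apply UpperHalfPlane.ext
  rw [UpperHalfPlane.coe_mk_subtype, UpperHalfPlane.coe_mk_subtype]
  apply Complex.ext <;> simp

lemma contVert {G : Subgroup SL2Z} {f : ℍ → ℂ} (hf : IsCusp2 G f) (x : ℝ) :
    ContinuousOn (vertF f x) (Set.Ioi 0) := by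
  have h : ContinuousOn (fun t : ℝ => (f ∘ ofComplex) ((x:ℂ) + (t:ℂ) * Complex.I)) (Set.Ioi 0) := by
    apply (contF hf).comp
    · exact Continuous.continuousOn (by continuity)
    · intro t ht
      simpa using ht
  exact h.congr (fun t ht => vertF_eq f x ht)

lemma integrableVert {G : Subgroup SL2Z} [G.Normal] [G.FiniteIndex] {f : ℍ → ℂ}
    (hf : IsCusp2 G f) (x : ℝ) {y : ℝ} (hy : 0 < y) :
    MeasureTheory.IntegrableOn (vertF f x) (Set.Ioi y) := by
  obtain ⟨A, C, c, hc, hbd⟩ := decay hf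
  set B := max y A with hB
  have hyB : y ≤ B := le_max_left _ _
  have h1 : MeasureTheory.IntegrableOn (vertF f x) (Set.Ioc y B) := by
    have hsub : Set.Icc y B ⊆ Set.Ioi 0 := fun t ht => lt_of_lt_of_le hy ht.1
    have h0 : MeasureTheory.IntegrableOn (vertF f x) (Set.Icc y B) :=
      ((contVert hf x).mono hsub).integrableOn_Icc
    exact h0.mono_set Set.Ioc_subset_Icc_self
  have h2 : MeasureTheory.IntegrableOn (vertF f x) (Set.Ioi B) := by
    have hsub : Set.Ioi B ⊆ Set.Ioi 0 := fun t ht => lt_of_lt_of_le hy (hyB.trans (le_of_lt ht))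
    have hmeas : MeasureTheory.AEStronglyMeasurable (vertF f x)
        (MeasureTheory.volume.restrict (Set.Ioi B)) :=
      ((contVert hf x).mono hsub).aestronglyMeasurable measurableSet_Ioi
    apply MeasureTheory.Integrable.mono' ((exp_neg_integrableOn_Ioi B hc).const_mul C) hmeas
    refine (MeasureTheory.ae_restrict_iff' measurableSet_Ioi).2
      (Filter.Eventually.of_forall fun t ht => ?_)
    have ht0 : 0 < t := hsub ht
    have hAt : A ≤ t := (le_max_right y A).trans (le_of_lt ht)
    rw [vertF, dif_pos ht0]
    exact hbd (UpperHalfPlane.mk ⟨x, t⟩ ht0) hAt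
  have hu : Set.Ioc y B ∪ Set.Ioi B = Set.Ioi y := Set.Ioc_union_Ioi_eq_Ioi hyB
  rw [← hu]
  exact h1.union h2

def UU (f : ℍ → ℂ) (z : ℂ) : ℂ := -Complex.I * ∫ t in Set.Ioi z.im, vertF f z.re t

lemma eichler_eq (f : ℍ → ℂ) (τ : ℍ) : eichler f τ = UU f (τ : ℂ) := rfl

lemma integral_Ioi_split {φ : ℝ → ℂ} {a b : ℝ} (hab : a ≤ b)
    (ha : MeasureTheory.IntegrableOn φ (Set.Ioi a)) :
    ∫ t in Set.Ioi a, φ t = (∫ t in Set.Ioc a b, φ t) + ∫ t in Set.Ioi b, φ t := by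
  rw [← Set.Ioc_union_Ioi_eq_Ioi hab]
  exact MeasureTheory.setIntegral_union (Set.Ioc_disjoint_Ioi le_rfl) measurableSet_Ioi
    (ha.mono_set (by rw [← Set.Ioc_union_Ioi_eq_Ioi hab]; exact Set.subset_union_left))
    (ha.mono_set (by rw [← Set.Ioc_union_Ioi_eq_Ioi hab]; exact Set.subset_union_right))

lemma integral_Ioi_sub_Ioi {φ : ℝ → ℂ} {a b : ℝ}
    (ha : MeasureTheory.IntegrableOn φ (Set.Ioi a))
    (hb : MeasureTheory.IntegrableOn φ (Set.Ioi b)) :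
    (∫ t in Set.Ioi a, φ t) - (∫ t in Set.Ioi b, φ t) = ∫ t in a..b, φ t := by
  rcases le_total a b with h | h
  · rw [integral_Ioi_split h ha, intervalIntegral.integral_of_le h]
    ring
  · rw [integral_Ioi_split h hb, intervalIntegral.integral_symm,
      intervalIntegral.integral_of_le h]
    ring

lemma re_xy (x y : ℝ) : ((x:ℂ) + (y:ℂ) * Complex.I).re = x := by simp
lemma im_xy (x y : ℝ) : ((x:ℂ) + (y:ℂ) * Complex.I).im = y := by simp

lemma horiz {G : Subgroup SL2Z} [G.Normal] [G.FiniteIndex] {f : ℍ → ℂ} (hf : IsCusp2 G f)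
    (x₁ x₂ : ℝ) {y₀ : ℝ} (hy : 0 < y₀) :
    UU f ((x₂:ℂ) + (y₀:ℂ) * Complex.I) - UU f ((x₁:ℂ) + (y₀:ℂ) * Complex.I)
      = ∫ s in x₁..x₂, (f ∘ ofComplex) ((s:ℂ) + (y₀:ℂ) * Complex.I) := by
  obtain ⟨A, C, c, hc, hbd⟩ := decay hf
  set F := f ∘ ofComplex with hF
  set T1 := ∫ s in x₁..x₂, F ((s:ℂ) + (y₀:ℂ)*Complex.I) with hT1
  set V : ℝ → ℂ := fun x => ∫ t in Set.Ioi y₀, vertF f x t with hV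
  have hUU : ∀ x : ℝ, UU f ((x:ℂ) + (y₀:ℂ)*Complex.I) = -Complex.I * V x := by
    intro x; rw [UU, re_xy, im_xy]
  have hv : ∀ (x : ℝ) (Y : ℝ), y₀ ≤ Y →
      (∫ t in y₀..Y, F ((x:ℂ) + (t:ℂ)*Complex.I)) = ∫ t in y₀..Y, vertF f x t := by
    intro x Y hY
    refine intervalIntegral.integral_congr fun t ht => ?_
    rw [Set.uIcc_of_le hY] at ht
    exact (vertF_eq f x (lt_of_lt_of_le hy ht.1)).symm
  have hmain : ∀ᶠ (Y : ℝ) in Filter.atTop,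
      T1 - (∫ s in x₁..x₂, F ((s:ℂ) + (Y:ℂ)*Complex.I))
        + Complex.I * (∫ t in y₀..Y, vertF f x₂ t)
        - Complex.I * (∫ t in y₀..Y, vertF f x₁ t) = 0 := by
    filter_upwards [Filter.eventually_ge_atTop y₀] with Y hY
    have hdiff : DifferentiableOn ℂ F
        (Set.uIcc ((x₁:ℂ)+(y₀:ℂ)*Complex.I).re ((x₂:ℂ)+(Y:ℂ)*Complex.I).re ×ℂ
         Set.uIcc ((x₁:ℂ)+(y₀:ℂ)*Complex.I).im ((x₂:ℂ)+(Y:ℂ)*Complex.I).im) := by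
      intro u hu
      rw [Complex.mem_reProdIm] at hu
      have him : 0 < u.im := by
        have h2 := hu.2
        rw [im_xy, im_xy, Set.uIcc_of_le hY] at h2
        exact lt_of_lt_of_le hy h2.1
      exact (diffF hf him).differentiableWithinAt
    have hrect := Complex.integral_boundary_rect_eq_zero_of_differentiableOn F
      ((x₁:ℂ)+(y₀:ℂ)*Complex.I) ((x₂:ℂ)+(Y:ℂ)*Complex.I) hdiff
    rw [re_xy, re_xy, im_xy, im_xy] at hrect
    rw [hv x₁ Y hY, hv x₂ Y hY, smul_eq_mul, smul_eq_mul] at hrect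
    exact hrect
  have hG1 : Filter.Tendsto (fun Y : ℝ => ∫ s in x₁..x₂, F ((s:ℂ) + (Y:ℂ)*Complex.I))
      Filter.atTop (nhds 0) := by
    have hb : ∀ᶠ (Y : ℝ) in Filter.atTop,
        ‖∫ s in x₁..x₂, F ((s:ℂ) + (Y:ℂ)*Complex.I)‖ ≤ C * Real.exp (-c * Y) * |x₂ - x₁| := by
      filter_upwards [Filter.eventually_ge_atTop A, Filter.eventually_gt_atTop (0:ℝ)]
        with Y hYA hY0
      apply intervalIntegral.norm_integral_le_of_norm_le_const
      intro s _
      have him : (0:ℝ) < ((s:ℂ)+(Y:ℂ)*Complex.I).im := by rw [im_xy]; exact hY0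
      rw [hF, Function.comp_apply, ofComplex_apply_of_im_pos him]
      have hb := hbd (UpperHalfPlane.mk _ him) (by rw [UpperHalfPlane.mk_im, im_xy]; exact hYA)
      rwa [UpperHalfPlane.mk_im, im_xy] at hb
    refine squeeze_zero_norm' hb ?_
    have h1 : Filter.Tendsto (fun Y : ℝ => -c * Y) Filter.atTop Filter.atBot :=
      (Filter.tendsto_const_mul_atBot_of_neg (neg_lt_zero.mpr hc)).mpr Filter.tendsto_id
    have h2 := Real.tendsto_exp_atBot.comp h1
    have h3 := (h2.const_mul C).mul_const |x₂ - x₁|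
    simpa using h3
  have hG2 : Filter.Tendsto (fun Y : ℝ => ∫ t in y₀..Y, vertF f x₂ t)
      Filter.atTop (nhds (V x₂)) :=
    MeasureTheory.intervalIntegral_tendsto_integral_Ioi y₀ (integrableVert hf x₂ hy)
      Filter.tendsto_id
  have hG3 : Filter.Tendsto (fun Y : ℝ => ∫ t in y₀..Y, vertF f x₁ t)
      Filter.atTop (nhds (V x₁)) :=
    MeasureTheory.intervalIntegral_tendsto_integral_Ioi y₀ (integrableVert hf x₁ hy)
      Filter.tendsto_id
  have hten : Filter.Tendsto (fun Y : ℝ =>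
      T1 - (∫ s in x₁..x₂, F ((s:ℂ) + (Y:ℂ)*Complex.I))
        + Complex.I * (∫ t in y₀..Y, vertF f x₂ t)
        - Complex.I * (∫ t in y₀..Y, vertF f x₁ t))
      Filter.atTop (nhds (T1 - 0 + Complex.I * V x₂ - Complex.I * V x₁)) :=
    ((Filter.Tendsto.sub tendsto_const_nhds hG1).add
      (Filter.Tendsto.const_mul _ hG2)).sub (Filter.Tendsto.const_mul _ hG3)
  have h0 : Filter.Tendsto (fun _ : ℝ => (0:ℂ)) Filter.atTop
      (nhds (T1 - 0 + Complex.I * V x₂ - Complex.I * V x₁)) :=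
    Filter.Tendsto.congr' (by filter_upwards [hmain] with Y h; exact h) hten
  have hL := tendsto_nhds_unique h0 tendsto_const_nhds
  rw [hUU x₂, hUU x₁]
  linear_combination -hL

lemma master {G : Subgroup SL2Z} [G.Normal] [G.FiniteIndex] {f : ℍ → ℂ} (hf : IsCusp2 G f)
    {z₀ z : ℂ} (h₀ : 0 < z₀.im) (h : 0 < z.im) :
    UU f z = UU f z₀
      + (∫ s in z₀.re..z.re, (f ∘ ofComplex) ((s:ℂ) + (z₀.im:ℂ) * Complex.I))
      + Complex.I * ∫ t in z₀.im..z.im, (f ∘ ofComplex) ((z.re:ℂ) + (t:ℂ) * Complex.I) := by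
  have hcongr : (∫ t in z₀.im..z.im, vertF f z.re t)
      = ∫ t in z₀.im..z.im, (f ∘ ofComplex) ((z.re:ℂ) + (t:ℂ) * Complex.I) := by
    refine intervalIntegral.integral_congr fun t ht => ?_
    have ht0 : 0 < t := lt_of_lt_of_le (lt_min h₀ h) ht.1
    exact vertF_eq f z.re ht0
  have hvert : UU f z - UU f ((z.re:ℂ) + (z₀.im:ℂ) * Complex.I)
      = Complex.I * ∫ t in z₀.im..z.im, vertF f z.re t := by
    simp only [UU, re_xy, im_xy]
    have hsub := integral_Ioi_sub_Ioi (integrableVert hf z.re h₀) (integrableVert hf z.re h)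
    linear_combination Complex.I * hsub
  have hhoriz := horiz hf z₀.re z.re h₀
  rw [Complex.re_add_im z₀] at hhoriz
  rw [← hcongr]
  linear_combination hvert + hhoriz

lemma hasDerivAt_UU {G : Subgroup SL2Z} [G.Normal] [G.FiniteIndex] {f : ℍ → ℂ}
    (hf : IsCusp2 G f) {z₀ : ℂ} (h₀ : 0 < z₀.im) :
    HasDerivAt (UU f) ((f ∘ ofComplex) z₀) z₀ := by
  set F := f ∘ ofComplex with hFdef
  rw [hasDerivAt_iff_isLittleO, Asymptotics.isLittleO_iff]
  intro ε hε
  have hcont : ContinuousAt F z₀ := (diffF hf h₀).continuousAt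
  obtain ⟨δ, hδ0, hδ⟩ := Metric.continuousAt_iff.mp hcont (ε/2) (by positivity)
  set r := min (δ/2) (z₀.im/2) with hr
  have hr0 : 0 < r := lt_min (by positivity) (by positivity)
  filter_upwards [Metric.ball_mem_nhds z₀ hr0] with z hz
  rw [Metric.mem_ball, Complex.dist_eq] at hz
  have him_le : |z.im - z₀.im| ≤ ‖z - z₀‖ := by
    simpa [Complex.sub_im] using Complex.abs_im_le_norm (z - z₀)
  have hre_le : |z.re - z₀.re| ≤ ‖z - z₀‖ := by
    simpa [Complex.sub_re] using Complex.abs_re_le_norm (z - z₀)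
  have hrim : r ≤ z₀.im / 2 := min_le_right _ _
  have hrδ : r ≤ δ / 2 := min_le_left _ _
  have him : 0 < z.im := by
    have h2 : |z.im - z₀.im| < r := lt_of_le_of_lt him_le hz
    have := abs_lt.mp h2
    nlinarith
  have hm := master hf h₀ him
  -- continuity bound for horizontal segment
  have hbH : ∀ s ∈ Set.uIoc z₀.re z.re,
      ‖F ((s:ℂ) + (z₀.im:ℂ) * Complex.I) - F z₀‖ ≤ ε / 2 := by
    intro s hs
    have hs' : s ∈ Set.uIcc z₀.re z.re := Set.uIoc_subset_uIcc hs
    have h1 : |s - z₀.re| ≤ |z.re - z₀.re| := abs_sub_left_of_mem_uIcc hs'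
    have heq : ((s:ℂ) + (z₀.im:ℂ) * Complex.I) - z₀ = ((s - z₀.re : ℝ) : ℂ) := by
      apply Complex.ext <;> simp
    have hdist : dist ((s:ℂ) + (z₀.im:ℂ) * Complex.I) z₀ < δ := by
      rw [Complex.dist_eq, heq, Complex.norm_real, Real.norm_eq_abs]
      have : |s - z₀.re| < r := lt_of_le_of_lt (h1.trans hre_le) hz
      linarith
    have := hδ hdist
    rw [Complex.dist_eq] at this
    exact le_of_lt this
  have hbV : ∀ t ∈ Set.uIoc z₀.im z.im,
      ‖F ((z.re:ℂ) + (t:ℂ) * Complex.I) - F z₀‖ ≤ ε / 2 := by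
    intro t ht
    have ht' : t ∈ Set.uIcc z₀.im z.im := Set.uIoc_subset_uIcc ht
    have h1 : |t - z₀.im| ≤ |z.im - z₀.im| := abs_sub_left_of_mem_uIcc ht'
    have hdist : dist ((z.re:ℂ) + (t:ℂ) * Complex.I) z₀ < δ := by
      rw [Complex.dist_eq]
      have hle := Complex.norm_le_abs_re_add_abs_im (((z.re:ℂ) + (t:ℂ) * Complex.I) - z₀)
      have hre2 : (((z.re:ℂ) + (t:ℂ) * Complex.I) - z₀).re = z.re - z₀.re := by simp
      have him2 : (((z.re:ℂ) + (t:ℂ) * Complex.I) - z₀).im = t - z₀.im := by simp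
      rw [hre2, him2] at hle
      have : |z.re - z₀.re| + |t - z₀.im| < 2 * r := by
        have hb1 : |z.re - z₀.re| < r := lt_of_le_of_lt hre_le hz
        have hb2 : |t - z₀.im| < r := lt_of_le_of_lt (h1.trans him_le) hz
        linarith
      linarith
    have := hδ hdist
    rw [Complex.dist_eq] at this
    exact le_of_lt this
  -- integrability of the integrands on the segments
  have hintH : IntervalIntegrable (fun s : ℝ => F ((s:ℂ) + (z₀.im:ℂ) * Complex.I))
      MeasureTheory.volume z₀.re z.re := by
    apply ContinuousOn.intervalIntegrable
    exact (contF hf).comp (Continuous.continuousOn (by continuity))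
      (fun s _ => by simpa using h₀)
  have hintV : IntervalIntegrable (fun t : ℝ => F ((z.re:ℂ) + (t:ℂ) * Complex.I))
      MeasureTheory.volume z₀.im z.im := by
    apply ContinuousOn.intervalIntegrable
    exact (contF hf).comp (Continuous.continuousOn (by continuity))
      (fun t ht => by simpa using lt_of_lt_of_le (lt_min h₀ him) ht.1)
  -- rewrite the difference
  have hHsub : (∫ s in z₀.re..z.re, F ((s:ℂ) + (z₀.im:ℂ) * Complex.I))
        - ((z.re - z₀.re : ℝ) : ℂ) * F z₀
      = ∫ s in z₀.re..z.re, (F ((s:ℂ) + (z₀.im:ℂ) * Complex.I) - F z₀) := by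
    rw [intervalIntegral.integral_sub hintH intervalIntegrable_const,
      intervalIntegral.integral_const, Complex.real_smul]
  have hVsub : (∫ t in z₀.im..z.im, F ((z.re:ℂ) + (t:ℂ) * Complex.I))
        - ((z.im - z₀.im : ℝ) : ℂ) * F z₀
      = ∫ t in z₀.im..z.im, (F ((z.re:ℂ) + (t:ℂ) * Complex.I) - F z₀) := by
    rw [intervalIntegral.integral_sub hintV intervalIntegrable_const,
      intervalIntegral.integral_const, Complex.real_smul]
  have hdecomp : z - z₀ = ((z.re - z₀.re : ℝ) : ℂ) + ((z.im - z₀.im : ℝ) : ℂ) * Complex.I := by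
    apply Complex.ext <;> simp
  have hE : UU f z - UU f z₀ - (z - z₀) • F z₀
      = (∫ s in z₀.re..z.re, (F ((s:ℂ) + (z₀.im:ℂ) * Complex.I) - F z₀))
        + Complex.I * ∫ t in z₀.im..z.im, (F ((z.re:ℂ) + (t:ℂ) * Complex.I) - F z₀) := by
    rw [smul_eq_mul]
    linear_combination hm + Complex.I * hVsub + hHsub - F z₀ * hdecomp
  rw [hE]
  have hn1 : ‖∫ s in z₀.re..z.re, (F ((s:ℂ) + (z₀.im:ℂ) * Complex.I) - F z₀)‖
      ≤ ε / 2 * |z.re - z₀.re| :=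
    intervalIntegral.norm_integral_le_of_norm_le_const hbH
  have hn2 : ‖∫ t in z₀.im..z.im, (F ((z.re:ℂ) + (t:ℂ) * Complex.I) - F z₀)‖
      ≤ ε / 2 * |z.im - z₀.im| :=
    intervalIntegral.norm_integral_le_of_norm_le_const hbV
  calc ‖(∫ s in z₀.re..z.re, (F ((s:ℂ) + (z₀.im:ℂ) * Complex.I) - F z₀))
        + Complex.I * ∫ t in z₀.im..z.im, (F ((z.re:ℂ) + (t:ℂ) * Complex.I) - F z₀)‖
      ≤ ‖∫ s in z₀.re..z.re, (F ((s:ℂ) + (z₀.im:ℂ) * Complex.I) - F z₀)‖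
        + ‖Complex.I * ∫ t in z₀.im..z.im, (F ((z.re:ℂ) + (t:ℂ) * Complex.I) - F z₀)‖ :=
        norm_add_le _ _
    _ ≤ ε / 2 * |z.re - z₀.re| + ε / 2 * |z.im - z₀.im| := by
        rw [norm_mul, Complex.norm_I, one_mul]
        exact add_le_add hn1 hn2
    _ ≤ ε * ‖z - z₀‖ := by
        nlinarith [hre_le, him_le, hε.le, norm_nonneg (z - z₀)]

lemma denomZ_ne_zero (γ : SL2Z) (τ : ℍ) : denomZ γ τ ≠ 0 := by
  have h := UpperHalfPlane.denom_ne_zero γ τ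
  rwa [ModularGroup.denom_apply] at h

def sigmaC (γ : SL2Z) : ℂ → ℂ := fun z =>
  (((γ : Matrix (Fin 2) (Fin 2) ℤ) 0 0 : ℂ) * z + ((γ : Matrix (Fin 2) (Fin 2) ℤ) 0 1 : ℂ)) /
  (((γ : Matrix (Fin 2) (Fin 2) ℤ) 1 0 : ℂ) * z + ((γ : Matrix (Fin 2) (Fin 2) ℤ) 1 1 : ℂ))

lemma sigmaC_coe (γ : SL2Z) (τ : ℍ) : sigmaC γ (τ : ℂ) = ((γ • τ : ℍ) : ℂ) := by
  rw [UpperHalfPlane.coe_specialLinearGroup_apply]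
  simp [sigmaC]

lemma det_entries (γ : SL2Z) :
    ((γ : Matrix (Fin 2) (Fin 2) ℤ) 0 0 : ℂ) * ((γ : Matrix (Fin 2) (Fin 2) ℤ) 1 1 : ℂ)
      - ((γ : Matrix (Fin 2) (Fin 2) ℤ) 0 1 : ℂ) * ((γ : Matrix (Fin 2) (Fin 2) ℤ) 1 0 : ℂ)
      = 1 := by
  have h := γ.prop
  rw [Matrix.det_fin_two] at h
  exact_mod_cast congrArg (Int.cast : ℤ → ℂ) h

lemma hasDerivAt_sigmaC (γ : SL2Z) (τ : ℍ) :
    HasDerivAt (sigmaC γ) ((denomZ γ τ)⁻¹ ^ 2) (τ : ℂ) := by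
  set a := ((γ : Matrix (Fin 2) (Fin 2) ℤ) 0 0 : ℂ)
  set b := ((γ : Matrix (Fin 2) (Fin 2) ℤ) 0 1 : ℂ)
  set c := ((γ : Matrix (Fin 2) (Fin 2) ℤ) 1 0 : ℂ)
  set d := ((γ : Matrix (Fin 2) (Fin 2) ℤ) 1 1 : ℂ)
  have hden : c * (τ : ℂ) + d ≠ 0 := denomZ_ne_zero γ τ
  have h1 : HasDerivAt (fun z : ℂ => a * z + b) a (τ : ℂ) := by
    simpa using ((hasDerivAt_id (τ:ℂ)).const_mul a).add_const b
  have h2 : HasDerivAt (fun z : ℂ => c * z + d) c (τ : ℂ) := by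
    simpa using ((hasDerivAt_id (τ:ℂ)).const_mul c).add_const d
  have h := h1.div h2 hden
  have hnum : a * (c * (τ:ℂ) + d) - (a * (τ:ℂ) + b) * c = 1 := by
    linear_combination det_entries γ
  rw [hnum] at h
  have : denomZ γ τ = c * (τ:ℂ) + d := rfl
  rw [this, inv_pow, ← one_div]
  exact h


end Stmt17Aux

/-- for a weight-2 cusp form `f` on a finite-index normal subgroup `G` of
`SL(2,ℤ)`, `γ ∈ SL(2,ℤ)` and `g = f ∣[2] γ` (also a cusp form for `G`), the improper
integrals defining the Eichler integrals `u_f` and `u_g` converge absolutely, and there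
is a constant `c` with `u_f(γ·τ) = u_g(τ) + c` for all `τ ∈ ℍ`. -/
theorem stmt_17 (G : Subgroup SL2Z) [G.Normal] [G.FiniteIndex]
    (f g : ℍ → ℂ) (γ : SL2Z)
    (hf : IsCusp2 G f) (hg : IsCusp2 G g)
    (hfg : ∀ τ : ℍ, g τ = slash2 f γ τ) :
    (∀ τ : ℍ, IntegrableOn (vertF f (UpperHalfPlane.re τ)) (Set.Ioi (UpperHalfPlane.im τ))) ∧
    (∀ τ : ℍ, IntegrableOn (vertF g (UpperHalfPlane.re τ)) (Set.Ioi (UpperHalfPlane.im τ))) ∧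
    ∃ c : ℂ, ∀ τ : ℍ, eichler f (γ • τ) = eichler g τ + c := by
  refine ⟨fun τ => integrableVert hf _ τ.im_pos, fun τ => integrableVert hg _ τ.im_pos, ?_⟩
  set S : Set ℂ := {w : ℂ | 0 < w.im} with hSdef
  set D : ℂ → ℂ := fun w => UU f (sigmaC γ w) - UU g w with hD
  have hkey : ∀ w ∈ S, HasDerivAt D 0 w := by
    intro w hw
    set τ : ℍ := UpperHalfPlane.mk w hw with hτ
    have hcoe : (τ : ℂ) = w := rfl
    have hστ : sigmaC γ w = ((γ • τ : ℍ) : ℂ) := by rw [← hcoe, sigmaC_coe]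
    have him : 0 < (((γ • τ : ℍ) : ℂ)).im := by
      rw [UpperHalfPlane.coe_im]; exact (γ • τ).im_pos
    have h1 : HasDerivAt (UU f) ((f ∘ ofComplex) ((γ • τ : ℍ) : ℂ)) (sigmaC γ w) := by
      rw [hστ]; exact hasDerivAt_UU hf him
    have h2 : HasDerivAt (sigmaC γ) ((denomZ γ τ)⁻¹ ^ 2) w := by
      rw [← hcoe]; exact hasDerivAt_sigmaC γ τ
    have hcomp := HasDerivAt.comp w h1 h2
    have hval : (f ∘ ofComplex) ((γ • τ : ℍ) : ℂ) * ((denomZ γ τ)⁻¹ ^ 2) = g τ := by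
      rw [Function.comp_apply, ofComplex_apply, hfg, slash2]
      have hpow : (denomZ γ τ) ^ (-2:ℤ) = ((denomZ γ τ)⁻¹) ^ 2 := by
        rw [_root_.zpow_neg, inv_pow]
        norm_cast
      rw [hpow]
      ring
    rw [hval] at hcomp
    have hg' : HasDerivAt (UU g) (g τ) w := by
      have h3 := hasDerivAt_UU hg (show 0 < w.im from hw)
      have h4 : (g ∘ ofComplex) w = g τ := by
        rw [Function.comp_apply, ← hcoe, ofComplex_apply]
      rwa [h4] at h3
    have hD' := hcomp.sub hg'
    rw [sub_self] at hD'
    exact hD'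
  have hSconv : Convex ℝ S := convex_halfSpace_im_gt 0
  have hSopen : IsOpen S := Complex.continuous_im.isOpen_preimage _ isOpen_Ioi
  have hDdiff : DifferentiableOn ℂ D S :=
    fun w hw => ((hkey w hw).differentiableAt).differentiableWithinAt
  have hfderiv : ∀ w ∈ S, fderivWithin ℂ D S w = 0 := by
    intro w hw
    rw [fderivWithin_of_isOpen hSopen hw]
    have h0 : HasFDerivAt D (0 : ℂ →L[ℂ] ℂ) w := by
      have h5 := (hkey w hw).hasFDerivAt
      have h6 : (ContinuousLinearMap.toSpanSingleton ℂ (0:ℂ)) = 0 := by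
        ext1; simp
      rwa [h6] at h5
    exact h0.fderiv
  refine ⟨UU f (sigmaC γ Complex.I) - UU g Complex.I, fun τ => ?_⟩
  have hτS : (τ : ℂ) ∈ S := by
    rw [hSdef, Set.mem_setOf_eq, UpperHalfPlane.coe_im]; exact τ.im_pos
  have hIS : Complex.I ∈ S := by rw [hSdef, Set.mem_setOf_eq]; simp
  have hconst := hSconv.is_const_of_fderivWithin_eq_zero hDdiff hfderiv hτS hIS
  have he1 : eichler f (γ • τ) = UU f (sigmaC γ (τ : ℂ)) := by
    rw [eichler_eq, sigmaC_coe]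
  rw [he1, eichler_eq]
  have hconst' : UU f (sigmaC γ (τ : ℂ)) - UU g (τ : ℂ)
      = UU f (sigmaC γ Complex.I) - UU g Complex.I := hconst
  linear_combination hconst'
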